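/- Let H₁ and H₂ be finite-dimensional complex Hilbert spaces and let ψ ∈ H₁ ⊗ H₂ be a unit vector. Then there exist a family of non-negative real numbers {pᵢ} with Σᵢ pᵢ = 1 and orthonormal families {aᵢ} in H₁ and {bᵢ} in H₂ such that ψ = Σᵢ √pᵢ · aᵢ ⊗ bᵢ (Schmidt decomposition). -/

import Mathlib

open Matrix
open scoped Kronecker ComplexOrder

/-- The matrix square root of a positive semidefinite matrix, as `Matrix.PosSemidef.sqrt`
was defined in the older Mathlib (it has since been removed). -/
noncomputable def Matrix.PosSemidef.sqrt {n : Type*} [Fintype n] [DecidableEq n] {A : Matrix n n ℂ}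
    (hA : A.PosSemidef) : Matrix n n ℂ :=
  hA.1.eigenvectorUnitary.1 * diagonal ((↑) ∘ (Real.sqrt ∘ hA.1.eigenvalues)) *
    (star hA.1.eigenvectorUnitary : Matrix n n ℂ)

noncomputable def traceNorm {n : Type*} [Fintype n] [DecidableEq n] (A : Matrix n n ℂ) : ℝ :=
  ((Matrix.posSemidef_conjTranspose_mul_self A).sqrt).trace.re

noncomputable def gammaNorm {m n : Type*} [Fintype m] [DecidableEq m] [Fintype n] [DecidableEq n]
    (t : Matrix (m × n) (m × n) ℂ) : ℝ :=
  sInf { c : ℝ | ∃ (r : ℕ) (u : Fin r → Matrix m m ℂ) (v : Fin r → Matrix n n ℂ),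
    t = ∑ i, (u i) ⊗ₖ (v i) ∧ c = ∑ i, traceNorm (u i) * traceNorm (v i) }

def IsDensity {n : Type*} [Fintype n] (ρ : Matrix n n ℂ) : Prop :=
  ρ.PosSemidef ∧ ρ.trace = 1

def evec {ι : Type*} (ψ : EuclideanSpace ℂ ι) : ι → ℂ := ψ

noncomputable def tensorVec {ι κ : Type*} (a : EuclideanSpace ℂ ι) (b : EuclideanSpace ℂ κ) :
    EuclideanSpace ℂ (ι × κ) :=
  (WithLp.equiv 2 _).symm (fun p => evec a p.1 * evec b p.2)

noncomputable def projOnto {ι : Type*} (ψ : EuclideanSpace ℂ ι) : Matrix ι ι ℂ :=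
  Matrix.vecMulVec (evec ψ) (star (evec ψ))

open scoped InnerProductSpace

lemma tensorVec_apply {ι κ : Type*} (a : EuclideanSpace ℂ ι) (b : EuclideanSpace ℂ κ)
    (p : ι × κ) : tensorVec a b p = a p.1 * b p.2 := rfl

lemma tensorVec_smul_left {ι κ : Type*} (c : ℂ) (a : EuclideanSpace ℂ ι)
    (b : EuclideanSpace ℂ κ) : tensorVec (c • a) b = c • tensorVec a b := by
  ext p
  show (c • a) p.1 * b p.2 = c • (tensorVec a b p)
  rw [tensorVec_apply]
  simp [mul_assoc]

lemma tensorVec_zero_left {ι κ : Type*} [Fintype ι] [Fintype κ] (b : EuclideanSpace ℂ κ) :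
    tensorVec (0 : EuclideanSpace ℂ ι) b = 0 := by
  ext p
  show (0 : EuclideanSpace ℂ ι) p.1 * b p.2 = 0
  simp

/-- Schmidt decomposition: every unit vector in the tensor product of two
finite-dimensional complex Hilbert spaces has a Schmidt decomposition. -/
theorem schmidt_decomposition (m n : ℕ) (ψ : EuclideanSpace ℂ (Fin m × Fin n))
    (hψ : ‖ψ‖ = 1) :
    ∃ (k : ℕ) (p : Fin k → ℝ) (a : Fin k → EuclideanSpace ℂ (Fin m))
      (b : Fin k → EuclideanSpace ℂ (Fin n)),
      (∀ i, 0 ≤ p i) ∧ (∑ i, p i = 1) ∧ Orthonormal ℂ a ∧ Orthonormal ℂ b ∧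
      ψ = ∑ i, Real.sqrt (p i) • tensorVec (a i) (b i) := by
  classical
  set M : Matrix (Fin m) (Fin n) ℂ := Matrix.of fun x y => ψ (x, y) with hMdef
  have hPSD := Matrix.posSemidef_conjTranspose_mul_self M
  have hA : (Mᴴ * M).IsHermitian := hPSD.1
  set v : OrthonormalBasis (Fin n) ℂ (EuclideanSpace ℂ (Fin n)) := hA.eigenvectorBasis with hvdef
  set μ : Fin n → ℝ := hA.eigenvalues with hμdef
  have hμ0 : ∀ i, 0 ≤ μ i := fun i => hPSD.eigenvalues_nonneg i
  set w : Fin n → EuclideanSpace ℂ (Fin m) :=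
    fun i => (WithLp.equiv 2 _).symm (M *ᵥ ⇑(v i)) with hwdef
  set bf : Fin n → EuclideanSpace ℂ (Fin n) :=
    fun i => (WithLp.equiv 2 _).symm (fun y => (starRingEnd ℂ) (v i y)) with hbfdef
  have hvON : ∀ i j, (⟪v i, v j⟫_ℂ) = if i = j then 1 else 0 :=
    fun i j => orthonormal_iff_ite.mp v.orthonormal i j
  -- inner products of the w's
  have keyw : ∀ i j, (⟪w i, w j⟫_ℂ) = (μ j : ℂ) * (if i = j then 1 else 0) := by
    intro i j
    calc (⟪w i, w j⟫_ℂ)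
        = star (M *ᵥ ⇑(v i)) ⬝ᵥ (M *ᵥ ⇑(v j)) := (EuclideanSpace.inner_toLp_toLp _ _).trans (dotProduct_comm _ _)
      _ = (star ⇑(v i)) ᵥ* Mᴴ ⬝ᵥ (M *ᵥ ⇑(v j)) := by rw [Matrix.star_mulVec]
      _ = star ⇑(v i) ⬝ᵥ ((Mᴴ * M) *ᵥ ⇑(v j)) := by
          rw [← Matrix.dotProduct_mulVec, Matrix.mulVec_mulVec]
      _ = star ⇑(v i) ⬝ᵥ (μ j • ⇑(v j)) := by rw [hA.mulVec_eigenvectorBasis]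
      _ = (μ j : ℂ) * (star ⇑(v i) ⬝ᵥ ⇑(v j)) := by
          rw [dotProduct_smul]
          simp [Complex.real_smul]
      _ = (μ j : ℂ) * (⟪v i, v j⟫_ℂ) := by rw [EuclideanSpace.inner_eq_star_dotProduct, dotProduct_comm]
      _ = _ := by rw [hvON]
  -- completeness relation
  have hcomp : ∀ z y : Fin n, (∑ i, ⇑(v i) z * (starRingEnd ℂ) (⇑(v i) y))
      = if z = y then 1 else 0 := by
    intro z y
    have h1 : (hA.eigenvectorUnitary : Matrix (Fin n) (Fin n) ℂ)
        * star (hA.eigenvectorUnitary : Matrix (Fin n) (Fin n) ℂ) = 1 :=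
      Matrix.mem_unitaryGroup_iff.mp hA.eigenvectorUnitary.2
    have h2 : ((hA.eigenvectorUnitary : Matrix (Fin n) (Fin n) ℂ)
        * star (hA.eigenvectorUnitary : Matrix (Fin n) (Fin n) ℂ)) z y
        = (1 : Matrix (Fin n) (Fin n) ℂ) z y := by rw [h1]
    simpa [Matrix.mul_apply, Matrix.one_apply, Matrix.star_apply] using h2
  -- decomposition of ψ
  have hdecomp : ψ = ∑ i, tensorVec (w i) (bf i) := by
    ext p
    have hsum : (∑ i, tensorVec (w i) (bf i)) p = ∑ i, (tensorVec (w i) (bf i)) p := by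
      rw [WithLp.ofLp_sum, Finset.sum_apply]
    rw [hsum]
    have h1 : ∀ i, tensorVec (w i) (bf i) p
        = ∑ z, M p.1 z * (⇑(v i) z * (starRingEnd ℂ) (⇑(v i) p.2)) := by
      intro i
      rw [tensorVec_apply]
      show (M *ᵥ ⇑(v i)) p.1 * (starRingEnd ℂ) (⇑(v i) p.2) = _
      rw [Matrix.mulVec, dotProduct, Finset.sum_mul]
      exact Finset.sum_congr rfl fun z _ => by ring
    rw [Finset.sum_congr rfl fun i _ => h1 i, Finset.sum_comm]
    have h2 : ∀ z, ∑ i, M p.1 z * (⇑(v i) z * (starRingEnd ℂ) (⇑(v i) p.2))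
        = M p.1 z * (if z = p.2 then 1 else 0) := by
      intro z
      rw [← Finset.mul_sum, hcomp]
    rw [Finset.sum_congr rfl fun z _ => h2 z]
    simp [Prod.mk.eta, hMdef]
  -- trace identities
  have htr1 : (Mᴴ * M).trace = ∑ i, (μ i : ℂ) := by
    nth_rewrite 1 [hA.spectral_theorem]
    rw [Unitary.conjStarAlgAut_apply, Matrix.trace_mul_cycle,
      Matrix.mem_unitaryGroup_iff'.mp hA.eigenvectorUnitary.2, Matrix.one_mul,
      Matrix.trace_diagonal]
    rfl
  have htr2 : (Mᴴ * M).trace = 1 := by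
    have hnorm : (⟪ψ, ψ⟫_ℂ) = 1 := by
      rw [inner_self_eq_norm_sq_to_K, hψ]
      norm_num
    calc (Mᴴ * M).trace
        = ∑ y, ∑ x, (starRingEnd ℂ) (M x y) * M x y := by
          simp [Matrix.trace, Matrix.diag, Matrix.mul_apply, Matrix.conjTranspose_apply]
      _ = ∑ x, ∑ y, (starRingEnd ℂ) (M x y) * M x y := Finset.sum_comm
      _ = ∑ p : Fin m × Fin n, (starRingEnd ℂ) (ψ p) * ψ p := by
          rw [Fintype.sum_prod_type]
          rfl
      _ = (⟪ψ, ψ⟫_ℂ) := by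
          rw [PiLp.inner_apply]
          exact Finset.sum_congr rfl fun p _ => mul_comm _ _
      _ = 1 := hnorm
  have hsum1 : ∑ i, μ i = 1 := by
    have h := htr1.symm.trans htr2
    exact_mod_cast h
  -- zero-eigenvalue w's vanish
  have hw0 : ∀ i, μ i = 0 → w i = 0 := by
    intro i h
    have h2 : (⟪w i, w i⟫_ℂ) = 0 := by rw [keyw]; simp [h]
    exact inner_self_eq_zero.mp h2
  -- restrict to nonzero eigenvalues
  set S := {i : Fin n // μ i ≠ 0} with hSdef
  set k := Fintype.card S with hkdef
  set e : Fin k ≃ S := (Fintype.equivFin S).symm with hedef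
  refine ⟨k, fun j => μ (e j), fun j => (((Real.sqrt (μ (e j)) : ℝ) : ℂ))⁻¹ • w (e j),
    fun j => bf (e j), fun j => hμ0 _, ?_, ?_, ?_, ?_⟩
  · -- sum of p
    calc ∑ j, μ (e j) = ∑ s : S, μ s := Equiv.sum_comp e fun s : S => μ s
      _ = ∑ i ∈ Finset.univ.filter (fun i => μ i ≠ 0), μ i :=
          (Finset.sum_subtype _ (by simp) _).symm
      _ = ∑ i, μ i := Finset.sum_filter_ne_zero _
      _ = 1 := hsum1
  · -- orthonormal a
    rw [orthonormal_iff_ite]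
    intro j j'
    have hc : ∀ t : ℝ, (starRingEnd ℂ) (((t : ℂ))⁻¹) = ((t : ℂ))⁻¹ := by
      intro t; rw [map_inv₀, Complex.conj_ofReal]
    rw [inner_smul_left, inner_smul_right, keyw, hc]
    by_cases h : j = j'
    · subst h
      simp only [if_pos rfl, mul_one]
      have hne : μ (e j) ≠ 0 := (e j).2
      have hpos : 0 < μ (e j) := lt_of_le_of_ne (hμ0 _) (Ne.symm hne)
      have hs : (Real.sqrt (μ (e j)) : ℂ) * (Real.sqrt (μ (e j)) : ℂ) = ((μ (e j) : ℝ) : ℂ) := by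
        rw [← Complex.ofReal_mul, Real.mul_self_sqrt (hμ0 _)]
      have hsne : ((Real.sqrt (μ (e j)) : ℝ) : ℂ) ≠ 0 := by
        simpa using (Real.sqrt_ne_zero'.mpr hpos)
      field_simp
      rw [sq, hs]
    · have hne : (e j : Fin n) ≠ (e j') := by
        intro hcontra
        exact h (e.injective (Subtype.ext hcontra))
      rw [if_neg hne, if_neg h]
      ring
  · -- orthonormal b
    rw [orthonormal_iff_ite]
    intro j j'
    have hb : ∀ i i', (⟪bf i, bf i'⟫_ℂ) = if i = i' then 1 else 0 := by
      intro i i'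
      calc (⟪bf i, bf i'⟫_ℂ)
          = ∑ y, (starRingEnd ℂ) ((starRingEnd ℂ) (⇑(v i) y)) * (starRingEnd ℂ) (⇑(v i') y) := by
            rw [PiLp.inner_apply]; exact Finset.sum_congr rfl fun y _ => mul_comm _ _
        _ = ∑ y, (starRingEnd ℂ) (⇑(v i') y) * ⇑(v i) y := by
            exact Finset.sum_congr rfl fun y _ => by
              rw [Complex.conj_conj]; ring
        _ = (⟪v i', v i⟫_ℂ) := by rw [PiLp.inner_apply]; exact Finset.sum_congr rfl fun y _ => mul_comm _ _
        _ = if i' = i then 1 else 0 := hvON i' i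
        _ = if i = i' then 1 else 0 := by simp [eq_comm]
    rw [hb]
    by_cases h : j = j'
    · simp [h]
    · have hne : (e j : Fin n) ≠ (e j') := by
        intro hcontra
        exact h (e.injective (Subtype.ext hcontra))
      rw [if_neg hne, if_neg h]
  · -- the decomposition
    have hterm : ∀ j : Fin k,
        Real.sqrt (μ (e j)) • tensorVec ((((Real.sqrt (μ (e j)) : ℝ) : ℂ))⁻¹ • w (e j)) (bf (e j))
          = tensorVec (w (e j)) (bf (e j)) := by
      intro j
      have hne : μ (e j) ≠ 0 := (e j).2
      have hpos : 0 < μ (e j) := lt_of_le_of_ne (hμ0 _) (Ne.symm hne)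
      have hsne : ((Real.sqrt (μ (e j)) : ℝ) : ℂ) ≠ 0 := by
        simpa using (Real.sqrt_ne_zero'.mpr hpos)
      rw [tensorVec_smul_left, RCLike.real_smul_eq_coe_smul (K := ℂ), smul_smul]
      convert one_smul ℂ (tensorVec (w (e j)) (bf (e j))) using 2
      exact mul_inv_cancel₀ hsne
    calc ψ = ∑ i, tensorVec (w i) (bf i) := hdecomp
      _ = ∑ i ∈ Finset.univ.filter (fun i => μ i ≠ 0), tensorVec (w i) (bf i) := by
          refine (Finset.sum_subset (Finset.filter_subset _ _) fun i _ hi => ?_).symm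
          have hz : μ i = 0 := by
            by_contra hzz
            exact hi (Finset.mem_filter.mpr ⟨Finset.mem_univ _, hzz⟩)
          rw [hw0 i hz, tensorVec_zero_left]
      _ = ∑ s : S, tensorVec (w s) (bf s) := Finset.sum_subtype _ (by simp) _
      _ = ∑ j, tensorVec (w (e j)) (bf (e j)) := (Equiv.sum_comp e _).symm
      _ = ∑ j, Real.sqrt (μ (e j)) •
            tensorVec ((((Real.sqrt (μ (e j)) : ℝ) : ℂ))⁻¹ • w (e j)) (bf (e j)) := by
          exact Finset.sum_congr rfl fun j _ => (hterm j).symm
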